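/- arXiv:1306.1728 — 4 statements merged into one kernel-verified Lean document; each statement's English description precedes it below -/
import Mathlib

section
/- For η ≥ 0, μ > 0, x > 0 and y ≥ 0, the η-th moment of the partial non-central chi-squared distribution satisfies the series expansion Q_{η,μ}(x,y) = e^{-x} Σ_{n=0}^∞ (x^n / n!) · Γ(η+μ+n, y) / Γ(μ+n), where Γ(a, y) = ∫_y^∞ t^{a-1} e^{-t} dt is the upper incomplete gamma function. -/
open Real MeasureTheory

/-- Modified Bessel function of the first kind `I_ν(z)` via its Maclaurin series. -/
noncomputable def besselI (ν z : ℝ) : ℝ :=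
  (z / 2) ^ ν * ∑' n : ℕ, (z ^ 2 / 4) ^ n / (n.factorial * Real.Gamma (ν + n + 1))

/-- Upper incomplete gamma function `Γ(a, y)`. -/
noncomputable def uGamma (a y : ℝ) : ℝ := ∫ t in Set.Ioi y, t ^ (a - 1) * Real.exp (-t)

/-- Regularized upper incomplete gamma function `Q_a(y) = Γ(a,y)/Γ(a)`. -/
noncomputable def regQ (a y : ℝ) : ℝ := uGamma a y / Real.Gamma a

/-- η-th moment of the partial non-central chi-squared distribution (Nuttall Q-function). -/
noncomputable def nuttallQ (η μ x y : ℝ) : ℝ :=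
  x ^ ((1 - μ) / 2) *
    ∫ t in Set.Ioi y, t ^ (η + (μ - 1) / 2) * Real.exp (-t - x) *
      besselI (μ - 1) (2 * Real.sqrt (x * t))

/-- Generalized Marcum Q-function. -/
noncomputable def marcumQ (μ x y : ℝ) : ℝ := nuttallQ 0 μ x y

/-- Complementary Marcum function `P_μ(x,y)`. -/
noncomputable def marcumP (μ x y : ℝ) : ℝ :=
  x ^ ((1 - μ) / 2) *
    ∫ t in Set.Ioc 0 y, t ^ ((μ - 1) / 2) * Real.exp (-t - x) *
      besselI (μ - 1) (2 * Real.sqrt (x * t))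

section Aux

open Filter Topology

private lemma aux_summable {η μ x : ℝ} (hη : 0 ≤ η) (hμ : 0 < μ) (hx : 0 < x) :
    Summable (fun n : ℕ => x ^ n / (n.factorial * Real.Gamma (μ + n)) * Real.Gamma (η + μ + n)) := by
  set f : ℕ → ℝ := fun n => x ^ n / (n.factorial * Real.Gamma (μ + n)) * Real.Gamma (η + μ + n)
    with hf
  have hfpos : ∀ n, 0 < f n := by
    intro n
    have h1 : 0 < Real.Gamma (μ + n) := Real.Gamma_pos_of_pos (by positivity)
    have h2 : 0 < Real.Gamma (η + μ + n) := Real.Gamma_pos_of_pos (by positivity)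
    have h3 : 0 < (n.factorial : ℝ) := by positivity
    positivity
  have key : ∀ n : ℕ, ‖f (n+1)‖ / ‖f n‖ = (x / ((n:ℝ)+1)) * ((η+μ+n) / (μ+n)) := by
    intro n
    rw [Real.norm_of_nonneg (hfpos _).le, Real.norm_of_nonneg (hfpos _).le]
    have h1 : Real.Gamma (μ + n) ≠ 0 := (Real.Gamma_pos_of_pos (by positivity)).ne'
    have h2 : Real.Gamma (η + μ + n) ≠ 0 := (Real.Gamma_pos_of_pos (by positivity)).ne'
    have h3 : (n.factorial : ℝ) ≠ 0 := by positivity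
    have e1 : Real.Gamma (η + μ + ((n:ℝ)+1)) = (η+μ+n) * Real.Gamma (η+μ+n) := by
      rw [show η + μ + ((n:ℝ)+1) = (η + μ + n) + 1 by ring,
        Real.Gamma_add_one (by positivity)]
    have e2 : Real.Gamma (μ + ((n:ℝ)+1)) = (μ+n) * Real.Gamma (μ+n) := by
      rw [show μ + ((n:ℝ)+1) = (μ + n) + 1 by ring, Real.Gamma_add_one (by positivity)]
    simp only [hf, Nat.cast_add, Nat.cast_one, e1, e2, pow_succ, Nat.factorial_succ,
      Nat.cast_mul]
    have h4 : (μ:ℝ) + n ≠ 0 := by positivity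
    have h5 : ((n:ℝ)+1) ≠ 0 := by positivity
    field_simp
  apply summable_of_ratio_test_tendsto_lt_one (l := 0) one_pos
    (Eventually.of_forall fun n => (hfpos n).ne')
  have t1 : Tendsto (fun n : ℕ => x / ((n:ℝ)+1)) atTop (𝓝 0) :=
    tendsto_const_nhds.div_atTop (tendsto_atTop_add_const_right _ 1 tendsto_natCast_atTop_atTop)
  have t2 : Tendsto (fun n : ℕ => (η+μ+(n:ℝ)) / (μ+n)) atTop (𝓝 1) := by
    have e : ∀ n : ℕ, (η+μ+(n:ℝ)) / (μ+n) = η/(μ+n) + 1 := by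
      intro n
      have h4 : (μ:ℝ) + n ≠ 0 := by positivity
      field_simp
      ring
    simp only [e]
    have : Tendsto (fun n : ℕ => η / (μ+(n:ℝ))) atTop (𝓝 0) :=
      tendsto_const_nhds.div_atTop (tendsto_atTop_add_const_left _ μ tendsto_natCast_atTop_atTop)
    simpa using this.add tendsto_const_nhds
  simp only [key]
  simpa using t1.mul t2

private lemma aux_integrable {a y : ℝ} (ha : 0 < a) (hy : 0 ≤ y) :
    IntegrableOn (fun t : ℝ => t ^ (a - 1) * Real.exp (-t)) (Set.Ioi y) := by
  have h := (Real.GammaIntegral_convergent ha).mono_set (Set.Ioi_subset_Ioi hy)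
  exact h.congr_fun (fun t _ => mul_comm _ _) measurableSet_Ioi

private lemma uGamma_le_Gamma {a y : ℝ} (ha : 0 < a) (hy : 0 ≤ y) :
    uGamma a y ≤ Real.Gamma a := by
  rw [uGamma, Real.Gamma_eq_integral ha]
  calc (∫ t in Set.Ioi y, t ^ (a-1) * Real.exp (-t))
      ≤ ∫ t in Set.Ioi 0, t ^ (a-1) * Real.exp (-t) := by
        apply setIntegral_mono_set (aux_integrable ha le_rfl)
        · filter_upwards [ae_restrict_mem measurableSet_Ioi] with t ht
          have h0 : (0:ℝ) < t := ht
          positivity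
        · exact HasSubset.Subset.eventuallyLE (Set.Ioi_subset_Ioi hy)
    _ = ∫ t in Set.Ioi 0, Real.exp (-t) * t ^ (a-1) :=
        setIntegral_congr_fun measurableSet_Ioi fun t _ => mul_comm _ _

private lemma pointwise_eq (η μ x : ℝ) (hx : 0 < x) {t : ℝ} (ht : 0 < t) :
    t ^ (η + (μ - 1) / 2) * Real.exp (-t - x) * besselI (μ - 1) (2 * Real.sqrt (x * t)) =
    (x ^ ((μ-1)/2) * Real.exp (-x)) *
      ∑' n : ℕ, (x ^ n / (n.factorial * Real.Gamma (μ + n))) *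
        (t ^ (η + μ + n - 1) * Real.exp (-t)) := by
  have hxt : (0:ℝ) ≤ x * t := by positivity
  rw [besselI, mul_div_cancel_left₀ _ (two_ne_zero),
    show (2 * Real.sqrt (x*t))^2 / 4 = x * t by rw [mul_pow, Real.sq_sqrt hxt]; ring,
    Real.sqrt_eq_rpow, ← Real.rpow_mul hxt]
  rw [show t ^ (η + (μ - 1) / 2) * Real.exp (-t - x) * ((x*t) ^ (1/2*(μ-1)) * ∑' n : ℕ,
      (x*t) ^ n / (n.factorial * Real.Gamma (μ - 1 + n + 1))) =
    (t ^ (η + (μ - 1) / 2) * Real.exp (-t - x) * (x*t) ^ (1/2*(μ-1))) * ∑' n : ℕ,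
      (x*t) ^ n / (n.factorial * Real.Gamma (μ - 1 + n + 1)) by ring,
    ← tsum_mul_left, ← tsum_mul_left]
  refine tsum_congr fun n => ?_
  rw [show μ - 1 + (n:ℝ) + 1 = μ + n by ring,
    Real.mul_rpow hx.le ht.le, mul_pow,
    show -t - x = -t + -x by ring, Real.exp_add,
    show t ^ (η+μ+(n:ℝ)-1) = t ^ (η+(μ-1)/2) * t ^ (1/2*(μ-1)) * t ^ n by
      rw [← Real.rpow_natCast t n, ← Real.rpow_add ht, ← Real.rpow_add ht]; congr 1; ring]
  ring

end Aux

theorem nuttallQ_series (η μ x y : ℝ) (hη : 0 ≤ η) (hμ : 0 < μ) (hx : 0 < x) (hy : 0 ≤ y) :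
    nuttallQ η μ x y =
      Real.exp (-x) * ∑' n : ℕ, x ^ n / n.factorial * (uGamma (η + μ + n) y / Real.Gamma (μ + n)) := by
  have hΓ : ∀ n : ℕ, 0 < Real.Gamma (μ + n) := fun n => Real.Gamma_pos_of_pos (by positivity)
  have hfact : ∀ n : ℕ, (0:ℝ) < n.factorial := fun n => by positivity
  have hpos : ∀ n : ℕ, (0:ℝ) < η + μ + n := fun n => by positivity
  set F : ℕ → ℝ → ℝ := fun n t =>
    (x ^ n / (n.factorial * Real.Gamma (μ + n))) * (t ^ (η + μ + n - 1) * Real.exp (-t)) with hFdef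
  have hcnn : ∀ n : ℕ, 0 ≤ x ^ n / (n.factorial * Real.Gamma (μ + n)) := fun n => by
    have := hΓ n; have := hfact n; positivity
  have hFint : ∀ n, Integrable (F n) (volume.restrict (Set.Ioi y)) := fun n =>
    (aux_integrable (hpos n) hy).const_mul _
  have hval : ∀ n : ℕ, (∫ t in Set.Ioi y, F n t) =
      (x ^ n / (n.factorial * Real.Gamma (μ + n))) * uGamma (η + μ + n) y := by
    intro n
    simp only [hFdef]
    rw [integral_const_mul]
    rfl
  have hnorm : ∀ n : ℕ, (∫ t in Set.Ioi y, ‖F n t‖) =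
      (x ^ n / (n.factorial * Real.Gamma (μ + n))) * uGamma (η + μ + n) y := by
    intro n
    rw [← hval n]
    apply integral_congr_ae
    filter_upwards [ae_restrict_mem measurableSet_Ioi] with t ht
    have h0 : (0:ℝ) < t := lt_of_le_of_lt hy ht
    rw [Real.norm_of_nonneg]
    have := hcnn n
    positivity
  have hsum : Summable (fun n => ∫ t in Set.Ioi y, ‖F n t‖) := by
    apply Summable.of_nonneg_of_le (fun n => integral_nonneg fun t => norm_nonneg _)
      (fun n => ?_) (aux_summable hη hμ hx)
    rw [hnorm n]
    exact mul_le_mul_of_nonneg_left (uGamma_le_Gamma (hpos n) hy) (hcnn n)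
  have hinter := MeasureTheory.integral_tsum_of_summable_integral_norm hFint hsum
  rw [nuttallQ,
    setIntegral_congr_fun measurableSet_Ioi
      (fun t ht => pointwise_eq η μ x hx (lt_of_le_of_lt hy ht)),
    integral_const_mul, ← hinter]
  have hS : (∑' n, ∫ t in Set.Ioi y, F n t) =
      ∑' n : ℕ, x ^ n / n.factorial * (uGamma (η + μ + n) y / Real.Gamma (μ + n)) := by
    refine tsum_congr fun n => ?_
    rw [hval n]
    have h1 := (hΓ n).ne'
    have h2 := (hfact n).ne'
    field_simp
  rw [hS]
  have hxpow : x ^ ((1-μ)/2) * x ^ ((μ-1)/2) = 1 := by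
    rw [← Real.rpow_add hx, show (1-μ)/2+(μ-1)/2 = 0 by ring, Real.rpow_zero]
  rw [show x ^ ((1-μ)/2) * ((x ^ ((μ-1)/2) * Real.exp (-x)) *
      ∑' n : ℕ, x ^ n / n.factorial * (uGamma (η + μ + n) y / Real.Gamma (μ + n))) =
    (x ^ ((1-μ)/2) * x ^ ((μ-1)/2)) * (Real.exp (-x) *
      ∑' n : ℕ, x ^ n / n.factorial * (uGamma (η + μ + n) y / Real.Gamma (μ + n))) by ring,
    hxpow, one_mul]
end

section
/- For η ≥ 0, μ > 0, x > 0 and y ≥ 0, Q_{η,μ}(x,y) = e^{-x} Σ_{n=0}^∞ (x^n / n!) · (Γ(η+μ+n)/Γ(μ+n)) · Q_{η+μ+n}(y), where Q_a(y) = Γ(a,y)/Γ(a) is the regularized upper incomplete gamma function. -/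
open Real MeasureTheory

open Filter Topology in
lemma summable_aux (η μ x : ℝ) (hη : 0 ≤ η) (hμ : 0 < μ) (hx : 0 < x) :
    Summable (fun n : ℕ => x ^ n / (n.factorial * Real.Gamma (μ + n)) *
      Real.Gamma (η + μ + n)) := by
  set f : ℕ → ℝ := fun n => x ^ n / (n.factorial * Real.Gamma (μ + n)) *
      Real.Gamma (η + μ + n) with hf
  have hμn : ∀ n : ℕ, (0:ℝ) < μ + n := fun n => by positivity
  have han : ∀ n : ℕ, (0:ℝ) < η + μ + n := fun n => by positivity
  have hfpos : ∀ n, 0 < f n := by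
    intro n
    have h1 := Real.Gamma_pos_of_pos (hμn n)
    have h2 := Real.Gamma_pos_of_pos (han n)
    have h3 : (0:ℝ) < n.factorial := by positivity
    rw [hf]
    positivity
  have hratio : ∀ n : ℕ, ‖f (n+1)‖ / ‖f n‖
      = x * (η + μ + n) / (((n:ℝ)+1) * (μ + n)) := by
    intro n
    have e1 : Real.Gamma (μ + ((n:ℕ)+1 : ℕ)) = (μ + n) * Real.Gamma (μ + n) := by
      push_cast
      rw [show μ + ((n:ℝ)+1) = (μ + n) + 1 by ring, Real.Gamma_add_one (hμn n).ne']
    have e2 : Real.Gamma (η + μ + ((n:ℕ)+1 : ℕ)) = (η + μ + n) * Real.Gamma (η + μ + n) := by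
      push_cast
      rw [show η + μ + ((n:ℝ)+1) = (η + μ + n) + 1 by ring, Real.Gamma_add_one (han n).ne']
    have e3 : (((n+1).factorial : ℕ) : ℝ) = ((n:ℝ)+1) * n.factorial := by
      rw [Nat.factorial_succ]; push_cast; ring
    rw [Real.norm_eq_abs, Real.norm_eq_abs, abs_of_pos (hfpos _), abs_of_pos (hfpos _), hf]
    simp only
    rw [e1, e2, e3, pow_succ]
    have h1 := (Real.Gamma_pos_of_pos (hμn n)).ne'
    have h2 := (Real.Gamma_pos_of_pos (han n)).ne'
    have h3 : ((n.factorial : ℝ)) ≠ 0 := by positivity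
    have h4 : ((n:ℝ)+1) ≠ 0 := by positivity
    field_simp
  have hT : Tendsto (fun n : ℕ => x * (η + μ + n) / (((n:ℝ)+1) * (μ + n)))
      atTop (𝓝 0) := by
    have h1 : Tendsto (fun n : ℕ => x * (1 + η / (μ + n))) atTop (𝓝 (x * (1 + 0))) := by
      refine Tendsto.const_mul _ (tendsto_const_nhds.add ?_)
      exact tendsto_const_nhds.div_atTop
        (tendsto_atTop_add_const_left _ μ tendsto_natCast_atTop_atTop)
    have h2 : Tendsto (fun n : ℕ => 1 / ((n:ℝ)+1)) atTop (𝓝 0) :=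
      tendsto_one_div_add_atTop_nhds_zero_nat
    have := h1.mul h2
    simp only [mul_zero] at this
    refine this.congr fun n => ?_
    have := (hμn n).ne'
    field_simp
    ring
  refine summable_of_ratio_test_tendsto_lt_one (l := 0) one_pos
    (Eventually.of_forall fun n => (hfpos n).ne') ?_
  exact (hT.congr fun n => (hratio n).symm)

theorem nuttallQ_series_regQ (η μ x y : ℝ) (hη : 0 ≤ η) (hμ : 0 < μ) (hx : 0 < x) (hy : 0 ≤ y) :
    nuttallQ η μ x y =
      Real.exp (-x) * ∑' n : ℕ,
        x ^ n / n.factorial * (Real.Gamma (η + μ + n) / Real.Gamma (μ + n)) * regQ (η + μ + n) y := by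
  have hμn : ∀ n : ℕ, (0:ℝ) < μ + n := fun n => by positivity
  have han : ∀ n : ℕ, (0:ℝ) < η + μ + n := fun n => by positivity
  set F : ℕ → ℝ → ℝ := fun n t => x ^ n / (n.factorial * Real.Gamma (μ + n)) *
      (t ^ (η + μ + (n:ℝ) - 1) * Real.exp (-t)) with hF
  -- integrability
  have hint0 : ∀ n, IntegrableOn (F n) (Set.Ioi 0) := by
    intro n
    have h1 := Real.GammaIntegral_convergent (han n)
    have h2 : IntegrableOn (fun t : ℝ => t ^ (η + μ + (n:ℝ) - 1) * Real.exp (-t))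
        (Set.Ioi 0) := h1.congr_fun (fun t _ => mul_comm _ _) measurableSet_Ioi
    exact h2.const_mul _
  have hinty : ∀ n, IntegrableOn (F n) (Set.Ioi y) := fun n =>
    (hint0 n).mono_set (Set.Ioi_subset_Ioi hy)
  have hFnonneg : ∀ n, ∀ t ∈ Set.Ioi (0:ℝ), 0 ≤ F n t := by
    intro n t ht
    have ht0 : (0:ℝ) < t := ht
    have := Real.Gamma_pos_of_pos (hμn n)
    rw [hF]; positivity
  -- integral values
  have hIoi0 : ∀ n, ∫ t in Set.Ioi (0:ℝ), F n t
      = x ^ n / (n.factorial * Real.Gamma (μ + n)) * Real.Gamma (η + μ + n) := by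
    intro n
    rw [hF]
    simp only
    rw [MeasureTheory.integral_const_mul]
    congr 1
    rw [Real.Gamma_eq_integral (han n)]
    exact setIntegral_congr_fun measurableSet_Ioi fun t _ => mul_comm _ _
  have hIoiy : ∀ n, ∫ t in Set.Ioi y, F n t
      = x ^ n / (n.factorial * Real.Gamma (μ + n)) * uGamma (η + μ + n) y := by
    intro n
    rw [hF]
    simp only
    rw [MeasureTheory.integral_const_mul, uGamma]
  -- finiteness of the sum of lintegrals
  have hsum := summable_aux η μ x hη hμ hx
  have hfin : ∑' n, ∫⁻ t in Set.Ioi y, ‖F n t‖₊ ∂volume ≠ ⊤ := by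
    have hle : ∀ n, ∫⁻ t in Set.Ioi y, ‖F n t‖₊ ∂volume
        ≤ ENNReal.ofReal (x ^ n / (n.factorial * Real.Gamma (μ + n)) * Real.Gamma (η + μ + n)) := by
      intro n
      calc ∫⁻ t in Set.Ioi y, ‖F n t‖₊ ∂volume
          ≤ ∫⁻ t in Set.Ioi 0, ‖F n t‖₊ ∂volume :=
            lintegral_mono_set (Set.Ioi_subset_Ioi hy)
        _ = ∫⁻ t in Set.Ioi 0, ENNReal.ofReal (F n t) ∂volume := by
            refine lintegral_congr_ae ?_
            filter_upwards [self_mem_ae_restrict measurableSet_Ioi] with t ht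
            exact Real.enorm_eq_ofReal (hFnonneg n t ht)
        _ = ENNReal.ofReal (∫ t in Set.Ioi 0, F n t) := by
            rw [← ofReal_integral_eq_lintegral_ofReal (hint0 n)]
            filter_upwards [self_mem_ae_restrict measurableSet_Ioi] with t ht
            exact hFnonneg n t ht
        _ = _ := by rw [hIoi0 n]
    refine ne_top_of_le_ne_top ?_ (ENNReal.tsum_le_tsum hle)
    rw [← ENNReal.ofReal_tsum_of_nonneg ?_ hsum]
    · exact ENNReal.ofReal_ne_top
    · intro n
      have h1 := (Real.Gamma_pos_of_pos (hμn n)).le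
      have h2 := (Real.Gamma_pos_of_pos (han n)).le
      positivity
  -- swap integral and tsum
  have hswap : ∫ t in Set.Ioi y, ∑' n, F n t = ∑' n, ∫ t in Set.Ioi y, F n t :=
    MeasureTheory.integral_tsum (fun n => (hinty n).aestronglyMeasurable) hfin
  -- pointwise identity on Ioi y
  have hpt : Set.EqOn
      (fun t => t ^ (η + (μ - 1) / 2) * Real.exp (-t - x) *
        besselI (μ - 1) (2 * Real.sqrt (x * t)))
      (fun t => Real.exp (-x) * x ^ ((μ - 1) / 2) * ∑' n, F n t) (Set.Ioi y) := by
    intro t ht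
    have ht0 : 0 < t := lt_of_le_of_lt hy ht
    have hxt : (0:ℝ) < x * t := mul_pos hx ht0
    simp only [besselI]
    have hhalf : 2 * Real.sqrt (x*t) / 2 = Real.sqrt (x*t) := by ring
    have hsq : (2 * Real.sqrt (x*t))^2/4 = x*t := by
      rw [mul_pow, Real.sq_sqrt hxt.le]; ring
    have hGam : ∀ n : ℕ, μ - 1 + (n:ℝ) + 1 = μ + n := fun n => by ring
    rw [hhalf, hsq]
    simp only [hGam]
    have hsqrt_pow : Real.sqrt (x*t) ^ (μ-1) = x ^ ((μ-1)/2) * t ^ ((μ-1)/2) := by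
      rw [Real.sqrt_eq_rpow, ← Real.rpow_mul hxt.le,
        show 1/2*(μ-1) = (μ-1)/2 by ring, Real.mul_rpow hx.le ht0.le]
    have hexp : Real.exp (-t-x) = Real.exp (-t) * Real.exp (-x) := by
      rw [← Real.exp_add]; ring_nf
    have htp : t ^ (η+(μ-1)/2) * t ^ ((μ-1)/2) = t ^ (η+μ-1) := by
      rw [← Real.rpow_add ht0, show η+(μ-1)/2+(μ-1)/2 = η+μ-1 by ring]
    have hterm : ∀ n : ℕ, F n t = (t ^ (η+μ-1) * Real.exp (-t)) *
        ((x*t) ^ n / (n.factorial * Real.Gamma (μ + n))) := by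
      intro n
      have he : t ^ (η + μ + (n:ℝ) - 1) = t ^ (η+μ-1) * t ^ n := by
        rw [← Real.rpow_natCast t n, ← Real.rpow_add ht0]
        congr 1; ring
      rw [hF]
      simp only
      rw [he, mul_pow]
      ring
    have hts : ∑' n, F n t = (t ^ (η+μ-1) * Real.exp (-t)) *
        ∑' n : ℕ, (x*t) ^ n / (n.factorial * Real.Gamma (μ + n)) := by
      rw [← tsum_mul_left]
      exact tsum_congr hterm
    rw [hts, hsqrt_pow, hexp, ← htp]
    ring
  -- assemble
  rw [nuttallQ, setIntegral_congr_fun measurableSet_Ioi hpt,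
    MeasureTheory.integral_const_mul, hswap]
  have hxpow : x ^ ((1-μ)/2) * x ^ ((μ-1)/2) = 1 := by
    rw [← Real.rpow_add hx, show (1-μ)/2+(μ-1)/2 = 0 by ring, Real.rpow_zero]
  have htermeq : ∀ n : ℕ, ∫ t in Set.Ioi y, F n t
      = x ^ n / n.factorial * (Real.Gamma (η + μ + n) / Real.Gamma (μ + n)) *
        regQ (η + μ + n) y := by
    intro n
    rw [hIoiy n, regQ]
    have h1 := (Real.Gamma_pos_of_pos (hμn n)).ne'
    have h2 := (Real.Gamma_pos_of_pos (han n)).ne'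
    have h3 : ((n.factorial : ℝ)) ≠ 0 := by positivity
    field_simp
  rw [tsum_congr htermeq]
  rw [show x ^ ((1-μ)/2) * (Real.exp (-x) * x ^ ((μ-1)/2) *
      ∑' n : ℕ, x ^ n / n.factorial * (Real.Gamma (η + μ + n) / Real.Gamma (μ + n)) *
        regQ (η + μ + n) y)
    = (x ^ ((1-μ)/2) * x ^ ((μ-1)/2)) * (Real.exp (-x) *
      ∑' n : ℕ, x ^ n / n.factorial * (Real.Gamma (η + μ + n) / Real.Gamma (μ + n)) *
        regQ (η + μ + n) y) by ring, hxpow, one_mul]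
end

section
/- For η ≥ 1, μ > 0, x > 0 and y > 0, the recurrence written in terms of the scaled Bessel function Ĩ_μ(z) = e^{-z} I_μ(z) holds: Q_{η,μ+1}(x,y) = Q_{η,μ}(x,y) + η·Q_{η-1,μ+1}(x,y) + (y/x)^{μ/2} · y^η · e^{-(√x−√y)²} · Ĩ_μ(2√(xy)). -/
open Real MeasureTheory

namespace NuttallAux

noncomputable def sc (x ν : ℝ) (n : ℕ) : ℝ := x ^ n / (n.factorial * Real.Gamma (ν + n + 1))

noncomputable def S (x ν t : ℝ) : ℝ := ∑' n : ℕ, sc x ν n * t ^ n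

noncomputable def D (x ν t : ℝ) : ℝ := ∑' n : ℕ, sc x ν n * ((n : ℝ) * t ^ (n - 1))

lemma gamma_arg_pos {ν : ℝ} (hν : 0 < ν + 1) (n : ℕ) : 0 < ν + n + 1 := by
  have : (0:ℝ) ≤ n := Nat.cast_nonneg n
  linarith

lemma gamma_pos {ν : ℝ} (hν : 0 < ν + 1) (n : ℕ) : 0 < Real.Gamma (ν + n + 1) :=
  Real.Gamma_pos_of_pos (gamma_arg_pos hν n)

lemma sc_nonneg {x ν : ℝ} (hx : 0 ≤ x) (hν : 0 < ν + 1) (n : ℕ) : 0 ≤ sc x ν n :=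
  div_nonneg (pow_nonneg hx n)
    (mul_nonneg (Nat.cast_nonneg _) (gamma_pos hν n).le)

lemma min_pos {ν : ℝ} (hν : 0 < ν + 1) : 0 < min 1 (ν + 1) := lt_min one_pos hν

lemma min_mul_le {ν : ℝ} (hν : 0 < ν + 1) (n : ℕ) :
    min 1 (ν + 1) * ((n : ℝ) + 1) ≤ ν + n + 1 := by
  have hn : (0:ℝ) ≤ n := Nat.cast_nonneg n
  rcases le_total (ν + 1) 1 with h | h
  · rw [min_eq_right h]
    nlinarith
  · rw [min_eq_left h]
    nlinarith

lemma gamma_lb {ν : ℝ} (hν : 0 < ν + 1) (n : ℕ) :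
    min 1 (ν + 1) ^ n * n.factorial * Real.Gamma (ν + 1) ≤ Real.Gamma (ν + n + 1) := by
  induction n with
  | zero => simp
  | succ n ih =>
    have h1 : Real.Gamma (ν + (n + 1 : ℕ) + 1) = (ν + n + 1) * Real.Gamma (ν + n + 1) := by
      rw [show (ν + ((n:ℕ)+1 : ℕ) + 1 : ℝ) = (ν + n + 1) + 1 by push_cast; ring,
        Real.Gamma_add_one (gamma_arg_pos hν n).ne']
    have hm := min_pos hν
    have hΓ : 0 < Real.Gamma (ν + 1) := Real.Gamma_pos_of_pos hν
    calc min 1 (ν + 1) ^ (n+1) * ((n+1:ℕ).factorial : ℝ) * Real.Gamma (ν + 1)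
        = (min 1 (ν + 1) * ((n:ℝ) + 1)) * (min 1 (ν + 1) ^ n * n.factorial * Real.Gamma (ν + 1)) := by
          rw [Nat.factorial_succ]; push_cast; ring
      _ ≤ (ν + n + 1) * Real.Gamma (ν + n + 1) := by
          apply mul_le_mul (min_mul_le hν n) ih (by positivity) (gamma_arg_pos hν n).le
      _ = Real.Gamma (ν + (n + 1 : ℕ) + 1) := h1.symm

lemma sc_mul_pow_le {x ν : ℝ} (hx : 0 < x) (hν : 0 < ν + 1) (n : ℕ) {r : ℝ} (hr : 0 ≤ r) :
    sc x ν n * r ^ n ≤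
      (Real.Gamma (ν + 1))⁻¹ * Real.exp (2 * x / min 1 (ν + 1)) * ((r / 2) ^ n / n.factorial) := by
  set m := min 1 (ν + 1) with hm_def
  have hm : 0 < m := min_pos hν
  have hΓ : 0 < Real.Gamma (ν + 1) := Real.Gamma_pos_of_pos hν
  have hfac : (0:ℝ) < n.factorial := Nat.cast_pos.2 n.factorial_pos
  have h1 : sc x ν n ≤ x ^ n / ((n.factorial : ℝ) * (m ^ n * n.factorial * Real.Gamma (ν + 1))) := by
    unfold sc
    gcongr
    exact gamma_lb hν n
  have h2 : x ^ n / ((n.factorial : ℝ) * (m ^ n * n.factorial * Real.Gamma (ν + 1))) * r ^ n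
      = (Real.Gamma (ν + 1))⁻¹ * ((2 * x / m) ^ n / n.factorial) * ((r / 2) ^ n / n.factorial) := by
    field_simp [div_pow, mul_pow]
    rw [← mul_pow, ← mul_pow, ← mul_pow]
    congr 1
    rw [mul_comm m, div_mul_cancel₀ _ hm.ne']
    ring
  have h3 : (2 * x / m) ^ n / (n.factorial : ℝ) ≤ Real.exp (2 * x / m) := by
    have hnn : (0:ℝ) ≤ 2 * x / m := by positivity
    calc (2 * x / m) ^ n / (n.factorial : ℝ)
        ≤ ∑ i ∈ Finset.range (n + 1), (2 * x / m) ^ i / i.factorial := by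
          apply Finset.single_le_sum (f := fun i => (2 * x / m) ^ i / (i.factorial : ℝ))
            (fun i _ => by positivity) (Finset.self_mem_range_succ n)
      _ ≤ Real.exp (2 * x / m) := Real.sum_le_exp_of_nonneg hnn _
  calc sc x ν n * r ^ n
      ≤ x ^ n / ((n.factorial : ℝ) * (m ^ n * n.factorial * Real.Gamma (ν + 1))) * r ^ n := by
        apply mul_le_mul_of_nonneg_right h1 (pow_nonneg hr n)
    _ = (Real.Gamma (ν + 1))⁻¹ * ((2 * x / m) ^ n / n.factorial) * ((r / 2) ^ n / n.factorial) := h2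
    _ ≤ (Real.Gamma (ν + 1))⁻¹ * Real.exp (2 * x / m) * ((r / 2) ^ n / n.factorial) := by
        apply mul_le_mul_of_nonneg_right (mul_le_mul_of_nonneg_left h3 (by positivity))
        positivity

lemma S_summable {x ν : ℝ} (hx : 0 < x) (hν : 0 < ν + 1) (t : ℝ) :
    Summable (fun n => sc x ν n * t ^ n) := by
  apply Summable.of_norm_bounded
    ((Real.summable_pow_div_factorial (|t| / 2)).mul_left
      ((Real.Gamma (ν + 1))⁻¹ * Real.exp (2 * x / min 1 (ν + 1))))
  intro n
  rw [Real.norm_eq_abs, abs_mul, abs_pow, abs_of_nonneg (sc_nonneg hx.le hν n)]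
  exact sc_mul_pow_le hx hν n (abs_nonneg t)

lemma S_nonneg {x ν : ℝ} (hx : 0 < x) (hν : 0 < ν + 1) {t : ℝ} (ht : 0 ≤ t) :
    0 ≤ S x ν t :=
  tsum_nonneg fun n => mul_nonneg (sc_nonneg hx.le hν n) (pow_nonneg ht n)

lemma S_le {x ν : ℝ} (hx : 0 < x) (hν : 0 < ν + 1) {t : ℝ} (ht : 0 ≤ t) :
    S x ν t ≤ (Real.Gamma (ν + 1))⁻¹ * Real.exp (2 * x / min 1 (ν + 1)) * Real.exp (t / 2) := by
  have he : Real.exp (t / 2) = ∑' n : ℕ, (t / 2) ^ n / n.factorial := by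
    rw [Real.exp_eq_exp_ℝ, NormedSpace.exp_eq_tsum_div]
  calc S x ν t
      ≤ ∑' n : ℕ, (Real.Gamma (ν + 1))⁻¹ * Real.exp (2 * x / min 1 (ν + 1)) *
          ((t / 2) ^ n / n.factorial) := by
        apply Summable.tsum_le_tsum (fun n => sc_mul_pow_le hx hν n ht) (S_summable hx hν t)
        exact (Real.summable_pow_div_factorial (t / 2)).mul_left _
    _ = (Real.Gamma (ν + 1))⁻¹ * Real.exp (2 * x / min 1 (ν + 1)) * Real.exp (t / 2) := by
        rw [tsum_mul_left, he]

lemma sc_succ {x ν : ℝ} (hν : 0 < ν + 1) (n : ℕ) :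
    sc x ν (n + 1) * ((n : ℝ) + 1) = x * sc x (ν + 1) n := by
  have hΓ : (0:ℝ) < Real.Gamma ((ν + 1) + n + 1) := gamma_pos (by linarith) n
  unfold sc
  rw [show (ν + ((n:ℕ)+1 : ℕ) + 1 : ℝ) = (ν + 1) + n + 1 by push_cast; ring, Nat.factorial_succ]
  have hfac : (0:ℝ) < n.factorial := Nat.cast_pos.2 n.factorial_pos
  push_cast
  field_simp
  ring

lemma summable_n_sc {x ν : ℝ} (hx : 0 < x) (hν : 0 < ν + 1) (r : ℝ) :
    Summable (fun n : ℕ => sc x ν n * ((n : ℝ) * r ^ (n - 1))) := by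
  rw [← summable_nat_add_iff 1]
  apply Summable.congr (((S_summable hx (by linarith : 0 < (ν + 1) + 1) r).mul_left x))
  intro n
  rw [Nat.add_sub_cancel]
  push_cast
  rw [show sc x ν (n+1) * (((n:ℝ) + 1) * r ^ n) = (sc x ν (n+1) * ((n:ℝ) + 1)) * r ^ n by ring,
    sc_succ hν n]
  ring

lemma S_hasDerivAt {x ν : ℝ} (hx : 0 < x) (hν : 0 < ν + 1) (t : ℝ) :
    HasDerivAt (fun z => S x ν z) (D x ν t) t := by
  set R := |t| + 1 with hR_def
  have hR : 0 < R := by positivity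
  apply hasDerivAt_tsum_of_isPreconnected
    (u := fun n : ℕ => sc x ν n * ((n : ℝ) * R ^ (n - 1)))
    (summable_n_sc hx hν R) Metric.isOpen_ball (convex_ball (0:ℝ) R).isPreconnected
    (fun n z _ => (hasDerivAt_pow n z).const_mul (sc x ν n))
    (fun n z hz => ?_) (Metric.mem_ball_self hR) (S_summable hx hν 0) ?_
  · rw [Metric.mem_ball, Real.dist_eq, sub_zero]
    linarith [abs_nonneg t, le_abs_self t]
  · have hz' : |z| ≤ R := by
      have := Metric.mem_ball.1 hz
      rw [Real.dist_eq, sub_zero] at this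
      linarith
    rw [Real.norm_eq_abs, abs_mul, abs_mul, abs_pow, Nat.abs_cast,
      abs_of_nonneg (sc_nonneg hx.le hν n)]
    apply mul_le_mul_of_nonneg_left _ (sc_nonneg hx.le hν n)
    apply mul_le_mul_of_nonneg_left _ (Nat.cast_nonneg n)
    exact pow_le_pow_left₀ (abs_nonneg z) hz' _

lemma S_continuous {x ν : ℝ} (hx : 0 < x) (hν : 0 < ν + 1) : Continuous (S x ν) :=
  continuous_iff_continuousAt.2 fun t => (S_hasDerivAt hx hν t).continuousAt

lemma S_shift {x μ : ℝ} (hx : 0 < x) (hμ : 0 < μ) (t : ℝ) :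
    S x (μ - 1) t = μ * S x μ t + t * D x μ t := by
  have hμ1 : (0:ℝ) < μ + 1 := by linarith
  have hsum1 : Summable (fun n : ℕ => μ * (sc x μ n * t ^ n)) := (S_summable hx hμ1 t).mul_left μ
  have hsum2 : Summable (fun n : ℕ => (n : ℝ) * (sc x μ n * t ^ n)) := by
    apply Summable.congr (summable_n_sc hx hμ1 t |>.mul_left t)
    intro n
    match n with
    | 0 => simp
    | Nat.succ k =>
      rw [Nat.succ_sub_one]
      push_cast
      rw [pow_succ]
      ring
  have key : ∀ n : ℕ, sc x (μ - 1) n * t ^ n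
      = μ * (sc x μ n * t ^ n) + (n : ℝ) * (sc x μ n * t ^ n) := by
    intro n
    have hμn : (0:ℝ) < μ + n := by have : (0:ℝ) ≤ n := Nat.cast_nonneg n; linarith
    have hΓ : 0 < Real.Gamma (μ + n) := Real.Gamma_pos_of_pos hμn
    have hg : Real.Gamma (μ + n + 1) = (μ + n) * Real.Gamma (μ + n) := by
      rw [show (μ + n + 1 : ℝ) = (μ + n) + 1 by ring, Real.Gamma_add_one hμn.ne']
    have hfac : (0:ℝ) < n.factorial := Nat.cast_pos.2 n.factorial_pos
    unfold sc
    rw [show ((μ - 1) + n + 1 : ℝ) = μ + n by ring, hg]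
    field_simp
  have h2 : ∑' n : ℕ, (n : ℝ) * (sc x μ n * t ^ n) = t * D x μ t := by
    rw [D, ← tsum_mul_left]
    apply tsum_congr
    intro n
    match n with
    | 0 => simp
    | Nat.succ k =>
      rw [Nat.succ_sub_one]
      push_cast
      rw [pow_succ]
      ring
  rw [S, tsum_congr key, Summable.tsum_add hsum1 hsum2, tsum_mul_left, ← S, h2]

lemma f_le {x ν : ℝ} (hx : 0 < x) (hν : 0 < ν + 1) (p : ℝ) {t : ℝ} (ht : 0 < t) :
    t ^ p * Real.exp (-t - x) * S x ν t ≤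
      (Real.Gamma (ν + 1))⁻¹ * Real.exp (2 * x / min 1 (ν + 1)) *
        (t ^ p * Real.exp (-(1/2) * t)) := by
  set C := (Real.Gamma (ν + 1))⁻¹ * Real.exp (2 * x / min 1 (ν + 1)) with hC
  have hC0 : 0 ≤ C := by
    have := Real.Gamma_pos_of_pos hν
    positivity
  have htp : (0:ℝ) ≤ t ^ p := Real.rpow_nonneg ht.le p
  have hE : Real.exp (-t - x) * Real.exp (t / 2) ≤ Real.exp (-(1/2) * t) := by
    rw [← Real.exp_add]
    exact Real.exp_le_exp.2 (by linarith)
  calc t ^ p * Real.exp (-t - x) * S x ν t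
      ≤ t ^ p * Real.exp (-t - x) * (C * Real.exp (t / 2)) := by
        exact mul_le_mul_of_nonneg_left (S_le hx hν ht.le) (by positivity)
    _ = C * (t ^ p * (Real.exp (-t - x) * Real.exp (t / 2))) := by ring
    _ ≤ C * (t ^ p * Real.exp (-(1/2) * t)) := by
        apply mul_le_mul_of_nonneg_left (mul_le_mul_of_nonneg_left hE htp) hC0
    _ = C * (t ^ p * Real.exp (-(1/2) * t)) := rfl

lemma f_nonneg {x ν : ℝ} (hx : 0 < x) (hν : 0 < ν + 1) (p : ℝ) {t : ℝ} (ht : 0 < t) :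
    0 ≤ t ^ p * Real.exp (-t - x) * S x ν t := by
  have := S_nonneg hx hν ht.le
  have := Real.rpow_nonneg ht.le p
  positivity

lemma tendsto_aux {x ν : ℝ} (hx : 0 < x) (hν : 0 < ν + 1) (p : ℝ) :
    Filter.Tendsto (fun t => t ^ p * Real.exp (-t - x) * S x ν t) Filter.atTop (nhds 0) := by
  set C := (Real.Gamma (ν + 1))⁻¹ * Real.exp (2 * x / min 1 (ν + 1)) with hC
  have hg : Filter.Tendsto (fun t : ℝ => C * (t ^ p * Real.exp (-(1/2) * t)))
      Filter.atTop (nhds 0) := by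
    have := (tendsto_rpow_mul_exp_neg_mul_atTop_nhds_zero p (1/2) (by norm_num)).const_mul C
    simpa using this
  apply squeeze_zero_norm' _ hg
  filter_upwards [Filter.eventually_gt_atTop (0:ℝ)] with t ht
  rw [Real.norm_eq_abs, abs_of_nonneg (f_nonneg hx hν p ht)]
  exact f_le hx hν p ht

lemma integrable_aux {x ν y : ℝ} (hx : 0 < x) (hν : 0 < ν + 1) (hy : 0 < y) (p : ℝ) :
    IntegrableOn (fun t => t ^ p * Real.exp (-t - x) * S x ν t) (Set.Ioi y) := by
  apply integrable_of_isBigO_exp_neg (b := 1/4) (by norm_num)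
  · -- continuity on Ici y
    apply ContinuousOn.mul
    apply ContinuousOn.mul
    · intro t ht
      exact (Real.continuousAt_rpow_const t p (Or.inl (hy.trans_le ht).ne')).continuousWithinAt
    · exact (Real.continuous_exp.comp (continuous_id.neg.sub continuous_const)).continuousOn
    · exact (S_continuous hx hν).continuousOn
  · set C := (Real.Gamma (ν + 1))⁻¹ * Real.exp (2 * x / min 1 (ν + 1)) with hC
    have hC0 : 0 ≤ C := by
      have := Real.Gamma_pos_of_pos hν
      positivity
    rw [Asymptotics.isBigO_iff]
    refine ⟨C, ?_⟩
    have hev := (tendsto_rpow_mul_exp_neg_mul_atTop_nhds_zero p (1/4) (by norm_num)).eventually_lt_const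
      (by norm_num : (0:ℝ) < 1)
    filter_upwards [Filter.eventually_gt_atTop (0:ℝ), hev] with t ht hlt
    rw [Real.norm_eq_abs, abs_of_nonneg (f_nonneg hx hν p ht), Real.norm_eq_abs,
      abs_of_pos (Real.exp_pos _)]
    have h1 := f_le hx hν p (t := t) ht
    have h2 : Real.exp (-(1/2) * t) = Real.exp (-(1/4) * t) * Real.exp (-(1/4) * t) := by
      rw [← Real.exp_add]; ring_nf
    calc t ^ p * Real.exp (-t - x) * S x ν t
        ≤ C * (t ^ p * Real.exp (-(1/2) * t)) := h1
      _ = C * ((t ^ p * Real.exp (-(1/4) * t)) * Real.exp (-(1/4) * t)) := by rw [h2]; ring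
      _ ≤ C * (1 * Real.exp (-(1/4) * t)) := by
          apply mul_le_mul_of_nonneg_left _ hC0
          exact mul_le_mul_of_nonneg_right hlt.le (Real.exp_pos _).le
      _ = C * Real.exp (-(1/4) * t) := by ring

lemma Phi_hasDerivAt {η μ x : ℝ} (hx : 0 < x) (hμ : 0 < μ) {t : ℝ} (ht : 0 < t) :
    HasDerivAt (fun s => s ^ (η + μ) * Real.exp (-s - x) * S x μ s)
      (η * (t ^ (η + μ - 1) * Real.exp (-t - x) * S x μ t)
        + t ^ (η + μ - 1) * Real.exp (-t - x) * S x (μ - 1) t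
        - t ^ (η + μ) * Real.exp (-t - x) * S x μ t) t := by
  have h1 : HasDerivAt (fun s : ℝ => s ^ (η + μ)) ((η + μ) * t ^ (η + μ - 1)) t :=
    Real.hasDerivAt_rpow_const (Or.inl ht.ne')
  have h2 : HasDerivAt (fun s : ℝ => Real.exp (-s - x)) (-Real.exp (-t - x)) t := by
    have h : HasDerivAt (fun s : ℝ => -s - x) (-1) t := ((hasDerivAt_id t).neg).sub_const x
    simpa using h.exp
  have h3 := S_hasDerivAt hx (by linarith : (0:ℝ) < μ + 1) t
  have h := (h1.mul h2).mul h3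
  have hpow : t ^ (η + μ - 1) * t = t ^ (η + μ) := by
    calc t ^ (η + μ - 1) * t = t ^ (η + μ - 1) * t ^ (1:ℝ) := by rw [Real.rpow_one]
      _ = t ^ (η + μ - 1 + 1) := (Real.rpow_add ht _ _).symm
      _ = t ^ (η + μ) := by ring_nf
  refine h.congr_deriv ?_
  simp only [Pi.mul_apply]
  rw [S_shift hx hμ t]
  linear_combination (-(Real.exp (-t - x) * D x μ t)) * hpow

lemma key_integral {η μ x y : ℝ} (hμ : 0 < μ) (hx : 0 < x) (hy : 0 < y) :
    ∫ t in Set.Ioi y, t ^ (η + μ) * Real.exp (-t - x) * S x μ t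
      = (∫ t in Set.Ioi y, t ^ (η + μ - 1) * Real.exp (-t - x) * S x (μ - 1) t)
        + η * (∫ t in Set.Ioi y, t ^ (η + μ - 1) * Real.exp (-t - x) * S x μ t)
        + y ^ (η + μ) * Real.exp (-y - x) * S x μ y := by
  have hμ1 : (0:ℝ) < μ + 1 := by linarith
  have hμ0 : (0:ℝ) < (μ - 1) + 1 := by linarith
  have intA : IntegrableOn (fun t => t ^ (η + μ - 1) * Real.exp (-t - x) * S x μ t)
      (Set.Ioi y) := integrable_aux hx hμ1 hy _
  have intB : IntegrableOn (fun t => t ^ (η + μ - 1) * Real.exp (-t - x) * S x (μ - 1) t)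
      (Set.Ioi y) := integrable_aux hx hμ0 hy _
  have intC : IntegrableOn (fun t => t ^ (η + μ) * Real.exp (-t - x) * S x μ t)
      (Set.Ioi y) := integrable_aux hx hμ1 hy _
  have hFTC := MeasureTheory.integral_Ioi_of_hasDerivAt_of_tendsto'
    (f := fun s => s ^ (η + μ) * Real.exp (-s - x) * S x μ s)
    (f' := fun t => η * (t ^ (η + μ - 1) * Real.exp (-t - x) * S x μ t)
        + t ^ (η + μ - 1) * Real.exp (-t - x) * S x (μ - 1) t
        - t ^ (η + μ) * Real.exp (-t - x) * S x μ t)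
    (a := y) (m := 0)
    (fun t ht => Phi_hasDerivAt hx hμ (hy.trans_le ht))
    (((intA.const_mul η).add intB).sub intC)
    (tendsto_aux hx hμ1 (η + μ))
  have intA' : IntegrableOn (fun t => η * (t ^ (η + μ - 1) * Real.exp (-t - x) * S x μ t))
      (Set.Ioi y) := intA.const_mul η
  have intAB : IntegrableOn (fun t => η * (t ^ (η + μ - 1) * Real.exp (-t - x) * S x μ t)
      + t ^ (η + μ - 1) * Real.exp (-t - x) * S x (μ - 1) t) (Set.Ioi y) := intA'.add intB
  rw [MeasureTheory.integral_sub intAB intC,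
    MeasureTheory.integral_add intA' intB,
    MeasureTheory.integral_const_mul] at hFTC
  linear_combination -hFTC

lemma besselI_eq {x : ℝ} (hx : 0 ≤ x) (ν : ℝ) {t : ℝ} (ht : 0 ≤ t) :
    besselI ν (2 * Real.sqrt (x * t)) = Real.sqrt (x * t) ^ ν * S x ν t := by
  unfold besselI S sc
  have h2 : 2 * Real.sqrt (x * t) / 2 = Real.sqrt (x * t) := by ring
  have h4 : (2 * Real.sqrt (x * t)) ^ 2 / 4 = x * t := by
    rw [mul_pow, Real.sq_sqrt (mul_nonneg hx ht)]; ring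
  rw [h2, h4]
  congr 1
  exact tsum_congr fun n => by rw [div_mul_eq_mul_div, mul_pow]

lemma sqrt_rpow_split {x t : ℝ} (hx : 0 ≤ x) (ht : 0 ≤ t) (ν : ℝ) :
    Real.sqrt (x * t) ^ ν = x ^ (ν / 2) * t ^ (ν / 2) := by
  rw [Real.sqrt_eq_rpow, ← Real.rpow_mul (mul_nonneg hx ht),
    show 1 / (2:ℝ) * ν = ν / 2 by ring, Real.mul_rpow hx ht]

lemma nuttallQ_eq (a b x y : ℝ) (hx : 0 < x) (hy : 0 < y) :
    nuttallQ a b x y = ∫ t in Set.Ioi y, t ^ (a + b - 1) * Real.exp (-t - x) * S x (b - 1) t := by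
  unfold nuttallQ
  have h : ∀ t ∈ Set.Ioi y, t ^ (a + (b - 1) / 2) * Real.exp (-t - x) *
      besselI (b - 1) (2 * Real.sqrt (x * t))
      = x ^ ((b - 1) / 2) * (t ^ (a + b - 1) * Real.exp (-t - x) * S x (b - 1) t) := by
    intro t ht
    have ht' : 0 < t := hy.trans ht
    have hsplit : t ^ (a + b - 1) = t ^ (a + (b - 1) / 2) * t ^ ((b - 1) / 2) := by
      rw [← Real.rpow_add ht']; ring_nf
    rw [besselI_eq hx.le (b - 1) ht'.le, sqrt_rpow_split hx.le ht'.le, hsplit]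
    ring
  rw [MeasureTheory.setIntegral_congr_fun measurableSet_Ioi h,
    MeasureTheory.integral_const_mul, ← mul_assoc, ← Real.rpow_add hx,
    show (1 - b) / 2 + (b - 1) / 2 = 0 by ring, Real.rpow_zero, one_mul]

end NuttallAux

open NuttallAux in
theorem nuttallQ_recurrence_scaled (η μ x y : ℝ) (hη : 1 ≤ η) (hμ : 0 < μ)
    (hx : 0 < x) (hy : 0 < y) :
    nuttallQ η (μ + 1) x y =
      nuttallQ η μ x y + η * nuttallQ (η - 1) (μ + 1) x y +
        (y / x) ^ (μ / 2) * y ^ η * Real.exp (-(Real.sqrt x - Real.sqrt y) ^ 2) *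
          (Real.exp (-(2 * Real.sqrt (x * y))) * besselI μ (2 * Real.sqrt (x * y))) := by
  have e1 : η + (μ + 1) - 1 = η + μ := by ring
  have e2 : μ + 1 - 1 = μ := by ring
  have e3 : η - 1 + (μ + 1) - 1 = η + μ - 1 := by ring
  rw [nuttallQ_eq η (μ + 1) x y hx hy, nuttallQ_eq η μ x y hx hy,
    nuttallQ_eq (η - 1) (μ + 1) x y hx hy, e1, e2, e3]
  have hbd : (y / x) ^ (μ / 2) * y ^ η * Real.exp (-(Real.sqrt x - Real.sqrt y) ^ 2) *
      (Real.exp (-(2 * Real.sqrt (x * y))) * besselI μ (2 * Real.sqrt (x * y)))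
      = y ^ (η + μ) * Real.exp (-y - x) * S x μ y := by
    rw [besselI_eq hx.le μ hy.le, sqrt_rpow_split hx.le hy.le]
    have hE : Real.exp (-(Real.sqrt x - Real.sqrt y) ^ 2) * Real.exp (-(2 * Real.sqrt (x * y)))
        = Real.exp (-y - x) := by
      rw [← Real.exp_add]
      congr 1
      have hsx : Real.sqrt x ^ 2 = x := Real.sq_sqrt hx.le
      have hsy : Real.sqrt y ^ 2 = y := Real.sq_sqrt hy.le
      have hxy : Real.sqrt (x * y) = Real.sqrt x * Real.sqrt y := Real.sqrt_mul hx.le y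
      rw [hxy]
      nlinarith [hsx, hsy]
    have hxμ : (0:ℝ) < x ^ (μ / 2) := Real.rpow_pos_of_pos hx _
    have hy3 : y ^ (μ / 2) * y ^ η * y ^ (μ / 2) = y ^ (η + μ) := by
      rw [← Real.rpow_add hy, ← Real.rpow_add hy,
        show μ / 2 + η + μ / 2 = η + μ by ring]
    rw [Real.div_rpow hy.le hx.le]
    calc y ^ (μ / 2) / x ^ (μ / 2) * y ^ η * Real.exp (-(Real.sqrt x - Real.sqrt y) ^ 2) *
          (Real.exp (-(2 * Real.sqrt (x * y))) * (x ^ (μ / 2) * y ^ (μ / 2) * S x μ y))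
        = (y ^ (μ / 2) * y ^ η * y ^ (μ / 2)) *
            (Real.exp (-(Real.sqrt x - Real.sqrt y) ^ 2) * Real.exp (-(2 * Real.sqrt (x * y)))) *
            S x μ y * (x ^ (μ / 2) / x ^ (μ / 2)) := by ring
      _ = y ^ (η + μ) * Real.exp (-y - x) * S x μ y := by
          rw [div_self hxμ.ne', hy3, hE]; ring
  rw [hbd]
  exact key_integral hμ hx hy
end

section
/- For ν ≥ 0 and z > 0, the ratio of modified Bessel functions satisfies 0 < I_{ν+1}(z)/I_ν(z) < 1. -/
open Real MeasureTheory

private lemma besselI_summable_aux (ν x : ℝ) (hν : 0 ≤ ν) (hx : 0 ≤ x) :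
    Summable (fun n : ℕ => x ^ n / (n.factorial * Real.Gamma (ν + n + 1))) := by
  apply summable_of_ratio_norm_eventually_le (r := 1/2) (by norm_num)
  filter_upwards [Filter.eventually_ge_atTop ⌈2*x⌉₊] with n hn
  have hg : (0:ℝ) < Real.Gamma (ν + n + 1) := Real.Gamma_pos_of_pos (by positivity)
  have hrec : Real.Gamma (ν + (n+1:ℕ) + 1) = (ν + n + 1) * Real.Gamma (ν + n + 1) := by
    push_cast
    rw [show ν + ((n:ℝ)+1) + 1 = (ν + n + 1) + 1 by ring,
      Real.Gamma_add_one (by positivity)]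
  have h2x : 2 * x ≤ (n:ℝ) + 1 := by
    calc 2*x ≤ (⌈2*x⌉₊ : ℝ) := Nat.le_ceil _
    _ ≤ (n:ℝ) := by exact_mod_cast hn
    _ ≤ (n:ℝ) + 1 := by linarith
  have hfac : ((n+1).factorial : ℝ) = ((n:ℝ)+1) * n.factorial := by
    rw [Nat.factorial_succ]; push_cast; ring
  have hfp : (0:ℝ) < n.factorial := by positivity
  rw [Real.norm_eq_abs, Real.norm_eq_abs, abs_of_nonneg (by positivity),
    abs_of_nonneg (by positivity), hrec, hfac]
  have hn0 : (0:ℝ) ≤ (n:ℝ) := n.cast_nonneg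
  have h1 : (1:ℝ) ≤ ν + n + 1 := by linarith
  have hxp : (0:ℝ) ≤ x ^ n / (n.factorial * Real.Gamma (ν + n + 1)) := by positivity
  have heq : x ^ (n+1) / ((((n:ℝ)+1) * n.factorial) * ((ν + n + 1) * Real.Gamma (ν + n + 1)))
      = (x / (((n:ℝ)+1) * (ν + n + 1))) * (x ^ n / (n.factorial * Real.Gamma (ν + n + 1))) := by
    rw [pow_succ]
    field_simp
  rw [heq]
  apply mul_le_mul_of_nonneg_right _ hxp
  rw [div_le_iff₀ (by positivity)]
  nlinarith

private lemma besselI_key_lt (ν z : ℝ) (hν : 0 ≤ ν) (hz : 0 < z) :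
    z/2 * ∑' n : ℕ, (z^2/4) ^ n / (n.factorial * Real.Gamma (ν + 1 + n + 1)) <
      ∑' n : ℕ, (z^2/4) ^ n / (n.factorial * Real.Gamma (ν + n + 1)) := by
  set x : ℝ := z^2/4 with hxdef
  have hx : 0 < x := by positivity
  set b : ℕ → ℝ := fun n => x ^ n / (n.factorial * Real.Gamma (ν + n + 1)) with hbdef
  set c : ℕ → ℝ := fun n => x ^ n / (n.factorial * Real.Gamma (ν + 1 + n + 1)) with hcdef
  have hb : Summable b := besselI_summable_aux ν x hν hx.le
  have hc : Summable c := besselI_summable_aux (ν+1) x (by linarith) hx.le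
  have hbshift : Summable (fun n => b (n+1)) := (summable_nat_add_iff 1).mpr hb
  have hbpos : ∀ n, 0 < b n := by
    intro n
    have : (0:ℝ) < Real.Gamma (ν + n + 1) := Real.Gamma_pos_of_pos (by positivity)
    positivity
  -- termwise bound
  have hterm : ∀ n : ℕ, z/2 * c n ≤ (b n + b (n+1)) / 2 := by
    intro n
    have hn0 : (0:ℝ) ≤ (n:ℝ) := n.cast_nonneg
    have hg1 : (0:ℝ) < Real.Gamma (ν + n + 1) := Real.Gamma_pos_of_pos (by positivity)
    have hg2 : (0:ℝ) < Real.Gamma (ν + n + 2) := Real.Gamma_pos_of_pos (by positivity)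
    have hrec : Real.Gamma (ν + n + 2) = (ν + n + 1) * Real.Gamma (ν + n + 1) := by
      rw [show ν + (n:ℝ) + 2 = (ν + n + 1) + 1 by ring, Real.Gamma_add_one (by positivity)]
    have hceq : c n = x ^ n / (n.factorial * Real.Gamma (ν + n + 2)) := by
      simp only [hcdef]
      ring_nf
    have hbeq : b (n+1) = x ^ n * x / ((((n:ℝ)+1) * n.factorial) * Real.Gamma (ν + n + 2)) := by
      simp only [hbdef]
      rw [Nat.factorial_succ, pow_succ]
      push_cast
      ring_nf
    have hfp : (0:ℝ) < n.factorial := by positivity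
    set u : ℝ := z/2 * c n with hudef
    have hu : 0 ≤ u := by
      have := (hbpos 0)
      have hcpos : 0 < c n := by simp only [hceq]; positivity
      positivity
    have hz2 : (z/2)^2 = x := by rw [hxdef]; ring
    -- u^2 ≤ b n * b (n+1)
    have hsq : u^2 ≤ b n * b (n+1) := by
      have hu2 : u^2 = x ^ n * x ^ n * x / ((n.factorial * Real.Gamma (ν + n + 2))^2) := by
        rw [hudef, hceq]
        rw [show (z/2 * (x ^ n / (n.factorial * Real.Gamma (ν + n + 2))))^2
          = (z/2)^2 * (x^n * x^n) / ((n.factorial * Real.Gamma (ν + n + 2))^2) by ring, hz2]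
        ring
      have hpq : b n * b (n+1) = x ^ n * x ^ n * x /
          ((n.factorial * Real.Gamma (ν + n + 1)) * ((((n:ℝ)+1) * n.factorial) * Real.Gamma (ν + n + 2))) := by
        rw [hbeq]
        simp only [hbdef]
        field_simp
      rw [hu2, hpq]
      apply div_le_div_of_nonneg_left (by positivity) (by positivity)
      rw [hrec]
      have h1 : ((n:ℝ)+1) ≤ ν + n + 1 := by linarith
      have key : ((n:ℝ)+1) * n.factorial * Real.Gamma (ν + n + 1) ≤
          (ν + n + 1) * n.factorial * Real.Gamma (ν + n + 1) := by
        apply mul_le_mul_of_nonneg_right (mul_le_mul_of_nonneg_right h1 hfp.le) hg1.le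
      nlinarith [mul_pos hfp hg1, mul_pos hfp (mul_pos (show (0:ℝ) < ν+n+1 by linarith) hg1)]
    -- conclude via sqrt AM-GM
    have h1 : u ≤ Real.sqrt (b n * b (n+1)) := by
      calc u = Real.sqrt (u^2) := (Real.sqrt_sq hu).symm
      _ ≤ _ := Real.sqrt_le_sqrt hsq
    have h2 : Real.sqrt (b n * b (n+1)) = Real.sqrt (b n) * Real.sqrt (b (n+1)) :=
      Real.sqrt_mul (hbpos n).le _
    have h3 : 2 * Real.sqrt (b n) * Real.sqrt (b (n+1)) ≤
        Real.sqrt (b n)^2 + Real.sqrt (b (n+1))^2 := two_mul_le_add_sq _ _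
    rw [Real.sq_sqrt (hbpos n).le, Real.sq_sqrt (hbpos (n+1)).le] at h3
    rw [h2] at h1
    linarith
  -- sum up
  have hsum2 : Summable (fun n => (b n + b (n+1)) / 2) := (hb.add hbshift).div_const 2
  have hcz : Summable (fun n => z/2 * c n) := hc.mul_left _
  have hle : ∑' n, (z/2 * c n) ≤ ∑' n, (b n + b (n+1)) / 2 := Summable.tsum_le_tsum hterm hcz hsum2
  have hrhs : ∑' n, (b n + b (n+1)) / 2 = ∑' n, b n - b 0 / 2 := by
    rw [tsum_div_const, Summable.tsum_add hb hbshift]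
    linarith [Summable.tsum_eq_zero_add hb]
  rw [tsum_mul_left] at hle
  have := hbpos 0
  calc z/2 * ∑' n, c n ≤ ∑' n, b n - b 0 / 2 := by rw [← hrhs]; exact hle
  _ < ∑' n, b n := by linarith

theorem besselI_ratio_bounds (ν z : ℝ) (hν : 0 ≤ ν) (hz : 0 < z) :
    0 < besselI (ν + 1) z / besselI ν z ∧ besselI (ν + 1) z / besselI ν z < 1 := by
  have hz2 : (0:ℝ) < z/2 := by linarith
  have hSb : 0 < ∑' n : ℕ, (z^2/4) ^ n / (n.factorial * Real.Gamma (ν + n + 1)) := by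
    refine Summable.tsum_pos (besselI_summable_aux ν (z^2/4) hν (by positivity)) (fun n => ?_) 0 ?_
    · have : (0:ℝ) < Real.Gamma (ν + n + 1) := Real.Gamma_pos_of_pos (by positivity)
      positivity
    · have : (0:ℝ) < Real.Gamma (ν + (0:ℕ) + 1) := Real.Gamma_pos_of_pos (by positivity)
      positivity
  have hSc : 0 < ∑' n : ℕ, (z^2/4) ^ n / (n.factorial * Real.Gamma (ν + 1 + n + 1)) := by
    refine Summable.tsum_pos (besselI_summable_aux (ν+1) (z^2/4) (by linarith) (by positivity))
      (fun n => ?_) 0 ?_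
    · have : (0:ℝ) < Real.Gamma (ν + 1 + n + 1) := Real.Gamma_pos_of_pos (by positivity)
      positivity
    · have : (0:ℝ) < Real.Gamma (ν + 1 + (0:ℕ) + 1) := Real.Gamma_pos_of_pos (by positivity)
      positivity
  have hb_pos : 0 < besselI ν z := mul_pos (Real.rpow_pos_of_pos hz2 _) hSb
  have hb1_pos : 0 < besselI (ν+1) z := mul_pos (Real.rpow_pos_of_pos hz2 _) hSc
  refine ⟨div_pos hb1_pos hb_pos, ?_⟩
  rw [div_lt_one hb_pos]
  unfold besselI
  rw [Real.rpow_add hz2, Real.rpow_one, mul_assoc]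
  exact mul_lt_mul_of_pos_left (besselI_key_lt ν z hν hz) (Real.rpow_pos_of_pos hz2 _)
end
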